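/- Let X be a locally compact metric space such that C₀(X) is infinite-dimensional and X has no isolated points. Then there exists f ∈ C₀(X) with 0 ≤ f ≤ 1 whose range contains the full interval [0,1] (equivalently, a positive contraction in C₀(X) with spectrum equal to [0,1]). -/

import Mathlib

open Set Filter Topology
open scoped ZeroAtInfty

namespace Stmt1Aux


noncomputable def q (b : ℕ → Bool) : ℝ := ∑' n, if b n then (2:ℝ)⁻¹ ^ (n+1) else 0

lemma term_nonneg (b : ℕ → Bool) (n : ℕ) : 0 ≤ (if b n then (2:ℝ)⁻¹ ^ (n+1) else 0) := by
  split <;> positivity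

lemma term_le (b : ℕ → Bool) (n : ℕ) :
    (if b n then (2:ℝ)⁻¹ ^ (n+1) else 0) ≤ (2:ℝ)⁻¹ ^ (n+1) := by
  split
  · exact le_rfl
  · positivity

lemma summable_geom : Summable (fun n : ℕ => (2:ℝ)⁻¹ ^ (n+1)) := by
  apply Summable.comp_injective (summable_geometric_of_lt_one (by norm_num) (by norm_num))
    (add_left_injective 1)

lemma tsum_geom : ∑' n : ℕ, (2:ℝ)⁻¹ ^ (n+1) = 1 := by
  have h : ∑' n : ℕ, (2:ℝ)⁻¹ ^ n = 2 := by
    rw [tsum_geometric_of_lt_one (by norm_num) (by norm_num)]; norm_num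
  calc ∑' n : ℕ, (2:ℝ)⁻¹ ^ (n+1) = ∑' n : ℕ, (2:ℝ)⁻¹ * (2:ℝ)⁻¹ ^ n := by
        congr 1; ext n; ring
    _ = (2:ℝ)⁻¹ * ∑' n : ℕ, (2:ℝ)⁻¹ ^ n := tsum_mul_left
    _ = 1 := by rw [h]; norm_num

lemma q_summable (b : ℕ → Bool) :
    Summable (fun n => if b n then (2:ℝ)⁻¹ ^ (n+1) else 0) :=
  Summable.of_nonneg_of_le (term_nonneg b) (term_le b) summable_geom

lemma q_mem (b : ℕ → Bool) : q b ∈ Icc (0:ℝ) 1 := by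
  constructor
  · exact tsum_nonneg (term_nonneg b)
  · rw [← tsum_geom]
    exact Summable.tsum_le_tsum (term_le b) (q_summable b) summable_geom

lemma q_continuous : Continuous q := by
  apply continuous_tsum (u := fun n : ℕ => (2:ℝ)⁻¹ ^ (n+1))
  · intro n
    exact (continuous_of_discreteTopology (f := fun t : Bool => if t = true then (2:ℝ)⁻¹ ^ (n+1) else 0)).comp (continuous_apply n)
  · exact summable_geom
  · intro n b
    rw [Real.norm_eq_abs, abs_of_nonneg (term_nonneg b n)]
    exact term_le b n

lemma q_surj : ∀ r ∈ Icc (0:ℝ) 1, ∃ b, q b = r := by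
  rintro r ⟨hr0, hr1⟩
  rcases eq_or_lt_of_le hr1 with rfl | hr1
  · refine ⟨fun _ => true, ?_⟩
    simp only [q, if_true]
    exact tsum_geom
  -- binary digits
  set d : ℕ → ℤ := fun n => ⌊r * 2 ^ (n+1)⌋ - 2 * ⌊r * 2 ^ n⌋ with hd
  have hd01 : ∀ n, d n = 0 ∨ d n = 1 := by
    intro n
    have h1 : 2 * ⌊r * 2 ^ n⌋ ≤ ⌊r * 2 ^ (n+1)⌋ := by
      apply Int.le_floor.2
      push_cast
      calc (2:ℝ) * ⌊r * 2 ^ n⌋ ≤ 2 * (r * 2 ^ n) := by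
            have := Int.floor_le (r * 2 ^ n); linarith
        _ = r * 2 ^ (n+1) := by ring
    have h2 : ⌊r * 2 ^ (n+1)⌋ < 2 * ⌊r * 2 ^ n⌋ + 2 := by
      apply Int.floor_lt.2
      push_cast
      have := Int.lt_floor_add_one (r * 2 ^ n)
      calc r * 2 ^ (n+1) = 2 * (r * 2 ^ n) := by ring
        _ < 2 * (⌊r * 2 ^ n⌋ + 1) := by linarith
        _ = 2 * ⌊r * 2 ^ n⌋ + 2 := by ring
    have hdn : d n = ⌊r * 2 ^ (n+1)⌋ - 2 * ⌊r * 2 ^ n⌋ := rfl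
    omega
  set b : ℕ → Bool := fun n => decide (d n = 1) with hb
  have hterm : ∀ n, (if b n then (2:ℝ)⁻¹ ^ (n+1) else 0)
      = (⌊r * 2 ^ (n+1)⌋ : ℝ) / 2 ^ (n+1) - (⌊r * 2 ^ n⌋ : ℝ) / 2 ^ n := by
    intro n
    have key : (if b n then (2:ℝ)⁻¹ ^ (n+1) else 0) = (d n : ℝ) * (2:ℝ)⁻¹ ^ (n+1) := by
      rcases hd01 n with h | h <;> simp [hb, h]
    rw [key, hd]
    push_cast
    simp only [inv_pow]
    field_simp
    ring
  have hfloor0 : ⌊r⌋ = 0 := Int.floor_eq_zero_iff.2 ⟨hr0, hr1⟩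
  have hpartial : ∀ N, (∑ n ∈ Finset.range N, if b n then (2:ℝ)⁻¹ ^ (n+1) else 0)
      = (⌊r * 2 ^ N⌋ : ℝ) / 2 ^ N := by
    intro N
    induction N with
    | zero => simp [hfloor0]
    | succ N ih =>
      rw [Finset.sum_range_succ, ih, hterm]
      ring
  have h1 : Tendsto (fun N => ∑ n ∈ Finset.range N, if b n then (2:ℝ)⁻¹ ^ (n+1) else 0)
      atTop (𝓝 (q b)) := (q_summable b).hasSum.tendsto_sum_nat
  have h2 : Tendsto (fun N => ∑ n ∈ Finset.range N, if b n then (2:ℝ)⁻¹ ^ (n+1) else 0)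
      atTop (𝓝 r) := by
    simp only [hpartial]
    apply tendsto_of_tendsto_of_tendsto_of_le_of_le (g := fun N : ℕ => r - (2:ℝ)⁻¹ ^ N)
      (h := fun _ : ℕ => r)
    · have : Tendsto (fun N : ℕ => (2:ℝ)⁻¹ ^ N) atTop (𝓝 0) :=
        tendsto_pow_atTop_nhds_zero_of_lt_one (by norm_num) (by norm_num)
      simpa using tendsto_const_nhds.sub this
    · exact tendsto_const_nhds
    · intro N
      have h := (Int.lt_floor_add_one (r * 2 ^ N)).le
      have hp : (0:ℝ) < 2 ^ N := by positivity
      show r - (2:ℝ)⁻¹ ^ N ≤ (⌊r * 2 ^ N⌋ : ℝ) / 2 ^ N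
      rw [le_div_iff₀ hp]
      have hinv : (2:ℝ)⁻¹ ^ N * 2 ^ N = 1 := by rw [← mul_pow]; norm_num
      nlinarith
    · intro N
      have h := Int.floor_le (r * 2 ^ N)
      have hp : (0:ℝ) < 2 ^ N := by positivity
      show (⌊r * 2 ^ N⌋ : ℝ) / 2 ^ N ≤ r
      rw [div_le_iff₀ hp]
      linarith
  exact ⟨b, tendsto_nhds_unique h1 h2⟩

end Stmt1Aux


open Stmt1Aux

theorem stmt1 {X : Type*} [MetricSpace X] [LocallyCompactSpace X]
    (hdim : ¬ FiniteDimensional ℂ C₀(X, ℂ))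
    (hiso : ∀ x : X, ¬ IsOpen ({x} : Set X)) :
    ∃ f : C₀(X, ℝ), (∀ x, f x ∈ Set.Icc (0 : ℝ) 1) ∧
      Set.Icc (0 : ℝ) 1 ⊆ Set.range (fun x => f x) := by
  -- X is nonempty
  have hne : Nonempty X := by
    by_contra h
    rw [not_nonempty_iff] at h
    haveI : Subsingleton C₀(X, ℂ) := ⟨fun f g => by ext x; exact h.elim x⟩
    exact hdim inferInstance
  obtain ⟨x₀⟩ := hne
  obtain ⟨K, hKc, hKn⟩ := exists_compact_mem_nhds x₀
  set V : Set X := interior K with hV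
  have hx₀V : x₀ ∈ V := mem_interior_iff_mem_nhds.2 hKn
  have hVK : V ⊆ K := interior_subset
  -- every neighborhood of a point contains another point
  have key : ∀ (x : X), ∀ N ∈ 𝓝 x, ∃ y ∈ N, y ≠ x := by
    intro x N hN
    by_contra h
    push_neg at h
    have hsub : N ⊆ {x} := fun y hy => h y hy
    have : IsOpen ({x} : Set X) :=
      isOpen_iff_mem_nhds.2 fun y hy => by
        rw [mem_singleton_iff] at hy; subst hy
        exact mem_of_superset hN hsub
    exact hiso x this
  -- work in the compact subtype K
  haveI : CompactSpace ↥K := isCompact_iff_compactSpace.mp hKc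
  have hpre : Preperfect (Subtype.val ⁻¹' V : Set ↥K) := by
    rw [preperfect_iff_nhds]
    intro x hx U hU
    rw [nhds_subtype, Filter.mem_comap] at hU
    obtain ⟨W, hW, hWU⟩ := hU
    obtain ⟨y, hy, hyx⟩ := key (↑x) (W ∩ V) (Filter.inter_mem hW (isOpen_interior.mem_nhds hx))
    refine ⟨⟨y, hVK hy.2⟩, ⟨hWU hy.1, hy.2⟩, ?_⟩
    exact fun hc => hyx (congrArg Subtype.val hc)
  have hperf : Perfect (closure (Subtype.val ⁻¹' V : Set ↥K)) := hpre.perfect_closure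
  have hnonempty : (closure (Subtype.val ⁻¹' V : Set ↥K)).Nonempty :=
    ⟨⟨x₀, hVK hx₀V⟩, subset_closure hx₀V⟩
  obtain ⟨g₀, -, hg₀c, hg₀i⟩ := hperf.exists_nat_bool_injection hnonempty
  set g : (ℕ → Bool) → X := fun b => ↑(g₀ b) with hg
  have hgc : Continuous g := continuous_subtype_val.comp hg₀c
  have hgi : Function.Injective g := Subtype.val_injective.comp hg₀i
  have hemb : IsClosedEmbedding g := hgc.isClosedEmbedding hgi
  -- Tietze extension of q along g
  obtain ⟨H, hHmem, hHg⟩ :=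
    ContinuousMap.exists_extension_forall_mem_of_isClosedEmbedding
      (⟨q, q_continuous⟩ : C((ℕ → Bool), ℝ)) (t := Icc (0:ℝ) 1) q_mem
      (nonempty_Icc.2 zero_le_one) hemb
  -- bump function equal to 1 on range g
  have hrange : IsCompact (Set.range g) := isCompact_range hgc
  obtain ⟨φ, hφ1, -, hφsupp, hφmem⟩ :=
    exists_continuous_one_zero_of_isCompact hrange isClosed_empty (disjoint_empty _)
  -- assemble
  have hcont : Continuous fun x => φ x * H x := (map_continuous φ).mul (map_continuous H)
  have hsupp : HasCompactSupport fun x => φ x * H x := hφsupp.mul_right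
  refine ⟨⟨⟨fun x => φ x * H x, hcont⟩, hsupp.is_zero_at_infty⟩, fun x => ?_, fun r hr => ?_⟩
  · constructor
    · exact mul_nonneg (hφmem x).1 (hHmem x).1
    · exact mul_le_one₀ (hφmem x).2 (hHmem x).1 (hHmem x).2
  · obtain ⟨b, hb⟩ := q_surj r hr
    refine ⟨g b, ?_⟩
    have h1 : φ (g b) = 1 := hφ1 (mem_range_self b)
    have h2 : H (g b) = q b := congrFun hHg b
    show φ (g b) * H (g b) = r
    rw [h1, h2, hb, one_mul]
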